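/- If p ∈ ℝ^d is a maximizer (i.e. all entries of p are positive, p_1 = 1, and min_{w ∈ W_d} G(p,w) ≥ min_{w ∈ W_d} G(q,w) for every q in the positive orthant), then D_1(p) = max_{k ∈ {1,...,d}} D_k(p). -/

import Mathlib

def wvec (d : ℕ) (j : Fin d) : Fin d → ℕ :=
  fun i => if i < j then 0 else if i = j then (j : ℕ) + 1 else (i : ℕ)

noncomputable def G (d : ℕ) (p : Fin d → ℝ) (w : Fin d → ℕ) : ℝ :=
  (∏ i, p i) / (Real.sqrt (∑ i, ((w i : ℝ)) ^ 2 * p i ^ 2)) ^ d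

noncomputable def minG (d : ℕ) (p : Fin d → ℝ) : ℝ :=
  ⨅ j : Fin d, G d p (wvec d j)

noncomputable def D (d : ℕ) (j : Fin d) (p : Fin d → ℝ) : ℝ :=
  Real.sqrt (∑ i, ((wvec d j i : ℝ)) ^ 2 * p i ^ 2)

noncomputable def Ssum (d : ℕ) (j : Fin d) (p : Fin d → ℝ) : ℝ :=
  ∑ i, ((wvec d j i : ℝ)) ^ 2 * p i ^ 2

lemma D_eq (d : ℕ) (j : Fin d) (p : Fin d → ℝ) : D d j p = Real.sqrt (Ssum d j p) := rfl

lemma G_eq (d : ℕ) (j : Fin d) (p : Fin d → ℝ) :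
    G d p (wvec d j) = (∏ i, p i) / (Real.sqrt (Ssum d j p)) ^ d := rfl

lemma Ssum_pos (d : ℕ) (j : Fin d) (p : Fin d → ℝ) (hp : ∀ i, 0 < p i) :
    0 < Ssum d j p := by
  apply Finset.sum_pos' (fun i _ => by positivity)
  refine ⟨j, Finset.mem_univ j, ?_⟩
  have : wvec d j j = (j : ℕ) + 1 := by simp [wvec]
  rw [this]
  have := hp j
  positivity

lemma G_pos (d : ℕ) (j : Fin d) (p : Fin d → ℝ) (hp : ∀ i, 0 < p i) :
    0 < G d p (wvec d j) := by
  rw [G_eq]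
  have h1 : 0 < ∏ i, p i := Finset.prod_pos (fun i _ => hp i)
  have h2 : 0 < Real.sqrt (Ssum d j p) := Real.sqrt_pos.2 (Ssum_pos d j p hp)
  positivity

lemma minG_pos (d : ℕ) [NeZero d] (p : Fin d → ℝ) (hp : ∀ i, 0 < p i) :
    0 < minG d p := by
  obtain ⟨j0, hj0⟩ := Finite.exists_min (fun j : Fin d => G d p (wvec d j))
  have : minG d p = G d p (wvec d j0) :=
    le_antisymm (ciInf_le (Finite.bddBelow_range _) j0) (le_ciInf hj0)
  rw [this]; exact G_pos d j0 p hp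

/-- `p*`: `p*_1 = 1`, `p*_2 = 1/√3`, `p*_j = √(2/3)/(j−1)` for `3 ≤ j ≤ d`
(0-based: index `i` has 1-based position `i+1`, so the denominator `j−1` is `i`). -/
noncomputable def pstar (d : ℕ) : Fin d → ℝ :=
  fun i => if (i : ℕ) = 0 then 1 else if (i : ℕ) = 1 then 1 / Real.sqrt 3
    else Real.sqrt (2 / 3) / ((i : ℕ) : ℝ)

/-- If `p` is a maximizer (positive, `p_1 = 1`, maximizing `min_{w ∈ W_d} G(·,w)`
over the positive orthant), then `D_1(p) = max_{k ∈ {1,…,d}} D_k(p)`. -/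
theorem stmt5 (d : ℕ) (hd : 2 ≤ d) (p : Fin d → ℝ)
    (hp : ∀ i, 0 < p i) (h1 : p ⟨0, by omega⟩ = 1)
    (hmax : ∀ q : Fin d → ℝ, (∀ i, 0 < q i) → minG d q ≤ minG d p) :
    IsGreatest (Set.range fun k : Fin d => D d k p) (D d ⟨0, by omega⟩ p) := by
  have : NeZero d := ⟨by omega⟩
  set z : Fin d := ⟨0, by omega⟩ with hzdef
  constructor
  · exact ⟨z, rfl⟩
  rintro x ⟨k, rfl⟩
  simp only
  by_contra hk
  push_neg at hk
  -- hk : D d z p < D d k p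
  have hSzk : Ssum d z p < Ssum d k p := by
    by_contra hle
    push_neg at hle
    have := Real.sqrt_le_sqrt hle
    rw [← D_eq, ← D_eq] at this
    exact absurd hk (not_lt.2 this)
  have hpz : 0 < p z := hp z
  set δ : ℝ := (Ssum d k p - Ssum d z p) / (2 * (p z) ^ 2) with hδdef
  have hδ : 0 < δ := by
    apply div_pos (by linarith) (by positivity)
  set t : ℝ := Real.sqrt (1 + δ) with htdef
  have ht2 : t ^ 2 = 1 + δ := Real.sq_sqrt (by linarith)
  have ht1 : 1 < t := by
    nlinarith [Real.sqrt_nonneg (1 + δ)]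
  have ht0 : 0 < t := by linarith
  set q : Fin d → ℝ := Function.update p z (t * p z) with hqdef
  have hq : ∀ i, 0 < q i := by
    intro i
    rcases eq_or_ne i z with h | h
    · subst h; simp [hqdef]; positivity
    · simp [hqdef, Function.update_of_ne h]; exact hp i
  -- product
  have hprod : ∏ i, q i = t * ∏ i, p i := by
    rw [hqdef, Finset.prod_update_of_mem (Finset.mem_univ z)]
    rw [← Finset.mul_prod_erase Finset.univ p (Finset.mem_univ z)]
    rw [Finset.sdiff_singleton_eq_erase]
    ring
  -- sums
  have hsum : ∀ j : Fin d, Ssum d j q =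
      Ssum d j p + ((wvec d j z : ℝ)) ^ 2 * ((t * p z) ^ 2 - (p z) ^ 2) := by
    intro j
    have : Ssum d j q = ∑ i, (((wvec d j i : ℝ)) ^ 2 * p i ^ 2 +
        if i = z then ((wvec d j z : ℝ)) ^ 2 * ((t * p z) ^ 2 - (p z) ^ 2) else 0) := by
      apply Finset.sum_congr rfl
      intro i _
      rcases eq_or_ne i z with h | h
      · subst h; simp [hqdef]; ring
      · simp [hqdef, Function.update_of_ne h, h]
    rw [this, Finset.sum_add_distrib, Finset.sum_ite_eq' Finset.univ z]
    simp [Ssum]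
  have hwz : ∀ j : Fin d, j ≠ z → wvec d j z = 0 := by
    intro j hj
    have : z < j := by
      rw [Fin.lt_def]
      have : (j : ℕ) ≠ 0 := fun h => hj (Fin.ext h)
      show (0:ℕ) < (j:ℕ); omega
    simp [wvec, this]
  have hsum_ne : ∀ j : Fin d, j ≠ z → Ssum d j q = Ssum d j p := by
    intro j hj
    rw [hsum j, hwz j hj]
    simp
  have hsum_z : Ssum d z q < Ssum d k p := by
    rw [hsum z]
    have hwzz : wvec d z z = 1 := by simp [wvec, hzdef]
    rw [hwzz]
    have : (t * p z) ^ 2 - (p z) ^ 2 = δ * p z ^ 2 := by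
      have : (t * p z) ^ 2 = t ^ 2 * p z ^ 2 := by ring
      rw [this, ht2]; ring
    rw [this]
    have : δ * p z ^ 2 = (Ssum d k p - Ssum d z p) / 2 := by
      rw [hδdef]; field_simp
    rw [this]
    push_cast
    linarith
  have hminGp : 0 < minG d p := minG_pos d p hp
  have hminle : minG d p ≤ G d p (wvec d k) := ciInf_le (Finite.bddBelow_range _) k
  have hP : 0 < ∏ i, p i := Finset.prod_pos (fun i _ => hp i)
  -- minG q ≥ t * minG p
  have hkey : t * minG d p ≤ minG d q := by
    apply le_ciInf
    intro j
    rcases eq_or_ne j z with h | h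
    · subst h
      calc t * minG d p ≤ t * G d p (wvec d k) :=
            mul_le_mul_of_nonneg_left hminle ht0.le
        _ ≤ G d q (wvec d z) := by
            rw [G_eq, G_eq, hprod, mul_div_assoc]
            apply mul_le_mul_of_nonneg_left _ ht0.le
            have h1 : Real.sqrt (Ssum d z q) ≤ Real.sqrt (Ssum d k p) :=
              Real.sqrt_le_sqrt hsum_z.le
            have h2 : 0 < Real.sqrt (Ssum d z q) :=
              Real.sqrt_pos.2 (Ssum_pos d z q hq)
            gcongr
    · have heq : G d q (wvec d j) = t * G d p (wvec d j) := by
        rw [G_eq, G_eq, hprod, hsum_ne j h, mul_div_assoc]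
      rw [heq]
      exact mul_le_mul_of_nonneg_left (ciInf_le (Finite.bddBelow_range _) j) ht0.le
  have hcon := hmax q hq
  nlinarith [hkey, hminGp, ht1, hcon]
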